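/- If α and β are irrational numbers such that for infinitely many pairs of indices (μ, ν) the reversed quotients satisfy α*_μ = β*_ν (equivalently, the initial strings of partial quotients of α and β reversed coincide: (a_μ, a_{μ−1}, ..., a₁) = (b_ν, b_{ν−1}, ..., b₁) for infinitely many μ), then α + β ∈ ℤ or α − β ∈ ℤ. -/

import Mathlib

/-- Complete quotients of the continued fraction of `α`:
`cq α 0 = α`, `cq α (n+1) = 1 / fract (cq α n)`. -/
noncomputable def cq (α : ℝ) : ℕ → ℝ
  | 0 => α
  | n + 1 => 1 / Int.fract (cq α n)

/-- Partial quotients `a_n` of the continued fraction of `α`. -/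
noncomputable def pq (α : ℝ) (n : ℕ) : ℤ := ⌊cq α n⌋

/-- Convergent numerators `p_n`. -/
noncomputable def cnum (α : ℝ) : ℕ → ℤ
  | 0 => pq α 0
  | 1 => pq α 1 * pq α 0 + 1
  | n + 2 => pq α (n + 2) * cnum α (n + 1) + cnum α n

/-- Convergent denominators `q_n`. -/
noncomputable def cden (α : ℝ) : ℕ → ℤ
  | 0 => 1
  | 1 => pq α 1
  | n + 2 => pq α (n + 2) * cden α (n + 1) + cden α n

/-- Approximation errors `ξ_n = |q_n α - p_n|`. -/
noncomputable def xi (α : ℝ) (n : ℕ) : ℝ := |(cden α n : ℝ) * α - (cnum α n : ℝ)|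

/-- Value of the finite continued fraction `[c₁; c₂, ..., c_k]` (empty list gives `0`). -/
noncomputable def cfval : List ℝ → ℝ
  | [] => 0
  | c :: l => c + 1 / cfval l

/-- Reversed quotient `α*_n = [0; a_n, a_{n-1}, ..., a_1]`. -/
noncomputable def revq (α : ℝ) (n : ℕ) : ℝ :=
  1 / cfval ((List.range n).map fun i => (pq α (n - i) : ℝ))

/-- Distance of a real number to the nearest integer. -/
noncomputable def distZ (x : ℝ) : ℝ := |x - round x|

/-- Irrationality measure function `ψ_α(t) = min_{q ∈ ℤ₊, q ≤ t} ‖qα‖`. -/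
noncomputable def psi (α : ℝ) (t : ℝ) : ℝ :=
  sInf {v : ℝ | ∃ q : ℕ, 0 < q ∧ (q : ℝ) ≤ t ∧ v = distZ ((q : ℝ) * α)}

/-- Continuant `⟨c₁, ..., c_k⟩` (empty continuant equals `1`). -/
def contnt : List ℤ → ℤ
  | [] => 1
  | [c] => c
  | c :: c' :: l => c * contnt (c' :: l) + contnt l

/-- The `k`-index: the number of orderings (permutations) of the `ψ`-functions
that occur for arbitrarily large `t`. -/
noncomputable def kIndex {n : ℕ} (α : Fin n → ℝ) : ℕ :=
  Set.ncard {σ : Equiv.Perm (Fin n) |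
    ∀ T : ℝ, ∃ t : ℝ, T < t ∧ ∀ i j : Fin n, i < j →
      psi (α (σ j)) t < psi (α (σ i)) t}

lemma cq_irrational {α : ℝ} (hα : Irrational α) : ∀ n, Irrational (cq α n)
  | 0 => hα
  | n + 1 => by
    have h := cq_irrational hα n
    have h2 : Irrational (Int.fract (cq α n)) := by
      rw [← Int.self_sub_floor]
      exact Irrational.sub_intCast h _
    simpa [cq, one_div] using h2.inv

lemma fract_cq_pos {α : ℝ} (hα : Irrational α) (n : ℕ) : 0 < Int.fract (cq α n) := by
  rcases eq_or_lt_of_le (Int.fract_nonneg (cq α n)) with h | h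
  · exfalso
    have h2 := cq_irrational hα n
    have : cq α n = (⌊cq α n⌋ : ℝ) := by
      have := h.symm
      unfold Int.fract at this
      linarith
    exact h2.ne_int _ this
  · exact h

lemma cq_one_lt {α : ℝ} (hα : Irrational α) (n : ℕ) : 1 < cq α (n + 1) := by
  rw [cq]
  exact (one_lt_div (fract_cq_pos hα n)).mpr (Int.fract_lt_one _)

lemma cq_pos {α : ℝ} (hα : Irrational α) (n : ℕ) : 0 < cq α (n + 1) :=
  lt_trans one_pos (cq_one_lt hα n)

lemma pq_one_le {α : ℝ} (hα : Irrational α) {n : ℕ} (hn : 1 ≤ n) : 1 ≤ pq α n := by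
  obtain ⟨m, rfl⟩ := Nat.exists_eq_add_of_le hn
  rw [Nat.add_comm, pq]
  exact Int.le_floor.mpr (by exact_mod_cast (cq_one_lt hα m).le)

lemma cq_eq_floor_add {α : ℝ} (n : ℕ) : cq α n = (pq α n : ℝ) + Int.fract (cq α n) :=
  (Int.floor_add_fract _).symm

lemma fract_cq_eq {α : ℝ} (hα : Irrational α) (n : ℕ) :
    Int.fract (cq α n) = 1 / cq α (n + 1) := by
  rw [cq, one_div_one_div]

lemma cq_eq {α : ℝ} (hα : Irrational α) (n : ℕ) :
    cq α n = (pq α n : ℝ) + 1 / cq α (n + 1) := by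
  rw [← fract_cq_eq hα, ← cq_eq_floor_add]

lemma cq_shift (α : ℝ) (m : ℕ) : ∀ n, cq α (m + n) = cq (cq α m) n
  | 0 => rfl
  | n + 1 => by
    rw [← Nat.add_assoc, cq, cq, cq_shift α m n]

lemma pq_shift (α : ℝ) (m n : ℕ) : pq α (m + n) = pq (cq α m) n := by
  rw [pq, pq, cq_shift]

lemma revq_zero (α : ℝ) : revq α 0 = 0 := by simp [revq, cfval]

lemma revq_succ (α : ℝ) (n : ℕ) :
    revq α (n + 1) = 1 / ((pq α (n + 1) : ℝ) + revq α n) := by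
  have hl : (List.range (n + 1)).map (fun i => (pq α (n + 1 - i) : ℝ))
      = (pq α (n + 1) : ℝ) :: (List.range n).map (fun i => (pq α (n - i) : ℝ)) := by
    rw [List.range_succ_eq_map, List.map_cons, List.map_map]
    simp [Function.comp, Nat.succ_sub_succ]
  rw [revq, hl, cfval, revq]

lemma revq_nonneg {α : ℝ} (hα : Irrational α) : ∀ n, 0 ≤ revq α n
  | 0 => by rw [revq_zero]
  | n + 1 => by
    rw [revq_succ]
    have ha : (1 : ℝ) ≤ (pq α (n + 1) : ℝ) := by exact_mod_cast pq_one_le hα (Nat.le_add_left 1 n)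
    have hr := revq_nonneg hα n
    positivity

lemma revq_pos {α : ℝ} (hα : Irrational α) (n : ℕ) : 0 < revq α (n + 1) := by
  rw [revq_succ]
  have ha : (1 : ℝ) ≤ (pq α (n + 1) : ℝ) := by exact_mod_cast pq_one_le hα (Nat.le_add_left 1 n)
  have hr := revq_nonneg hα n
  have : 0 < (pq α (n + 1) : ℝ) + revq α n := by linarith
  positivity

lemma revq_le_one {α : ℝ} (hα : Irrational α) : ∀ n, revq α n ≤ 1
  | 0 => by rw [revq_zero]; norm_num
  | n + 1 => by
    rw [revq_succ]
    have ha : (1 : ℝ) ≤ (pq α (n + 1) : ℝ) := by exact_mod_cast pq_one_le hα (Nat.le_add_left 1 n)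
    have hr := revq_nonneg hα n
    rw [div_le_one (by linarith)]
    linarith

lemma revq_eq_one {α : ℝ} (hα : Irrational α) {n : ℕ} (h : revq α n = 1) :
    n = 1 ∧ pq α 1 = 1 := by
  cases n with
  | zero => rw [revq_zero] at h; norm_num at h
  | succ m =>
    rw [revq_succ] at h
    have ha : (1 : ℝ) ≤ (pq α (m + 1) : ℝ) := by exact_mod_cast pq_one_le hα (Nat.le_add_left 1 m)
    have hr := revq_nonneg hα m
    have hd : (0 : ℝ) < (pq α (m + 1) : ℝ) + revq α m := by linarith
    rw [div_eq_one_iff_eq hd.ne'] at h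
    have ha1 : (pq α (m + 1) : ℝ) ≤ 1 := by linarith
    have ha2 : (pq α (m + 1) : ℝ) = 1 := le_antisymm ha1 ha |>.symm ▸ rfl
    have hr0 : revq α m = 0 := by rw [ha2] at h; linarith
    have hm : m = 0 := by
      by_contra hm
      obtain ⟨k, rfl⟩ := Nat.exists_eq_succ_of_ne_zero hm
      exact (revq_pos hα k).ne' hr0
    subst hm
    exact ⟨rfl, by exact_mod_cast ha2⟩

lemma matchP {α β : ℝ} (hα : Irrational α) (hβ : Irrational β) :
    ∀ μ ν : ℕ, revq α μ = revq β ν →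
      (μ = ν ∧ ∀ i, 1 ≤ i → i ≤ μ → pq α i = pq β i) ∨
      (μ = ν + 1 ∧ pq α 1 = 1 ∧ pq β 1 = pq α 2 + 1 ∧
        ∀ i, 2 ≤ i → i ≤ ν → pq β i = pq α (i + 1)) ∨
      (ν = μ + 1 ∧ pq β 1 = 1 ∧ pq α 1 = pq β 2 + 1 ∧
        ∀ i, 2 ≤ i → i ≤ μ → pq α i = pq β (i + 1)) := by
  intro μ
  induction μ with
  | zero =>
    intro ν h
    rw [revq_zero] at h
    cases ν with
    | zero => exact Or.inl ⟨rfl, by omega⟩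
    | succ k => exact absurd h.symm (revq_pos hβ k).ne'
  | succ m ih =>
    intro ν h
    cases ν with
    | zero =>
      rw [revq_zero] at h
      exact absurd h (revq_pos hα m).ne'
    | succ k =>
      rw [revq_succ, revq_succ] at h
      set A : ℝ := (pq α (m + 1) : ℝ) with hA
      set B : ℝ := (pq β (k + 1) : ℝ) with hB
      set r : ℝ := revq α m with hr
      set s : ℝ := revq β k with hs
      have hA1 : (1 : ℝ) ≤ A := by
        rw [hA]; exact_mod_cast pq_one_le hα (Nat.le_add_left 1 m)
      have hB1 : (1 : ℝ) ≤ B := by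
        rw [hB]; exact_mod_cast pq_one_le hβ (Nat.le_add_left 1 k)
      have hr0 : 0 ≤ r := revq_nonneg hα m
      have hs0 : 0 ≤ s := revq_nonneg hβ k
      have hr1 : r ≤ 1 := revq_le_one hα m
      have hs1 : s ≤ 1 := revq_le_one hβ k
      have hden : A + r = B + s := by
        have h1 : (0 : ℝ) < A + r := by linarith
        have h2 : (0 : ℝ) < B + s := by linarith
        rw [div_eq_div_iff h1.ne' h2.ne'] at h
        linarith
      by_cases hre : r = 1
      · obtain ⟨hm1, hpa1⟩ := revq_eq_one hα hre
        -- m = 1, pq α 1 = 1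
        by_cases hse : s = 1
        · obtain ⟨hk1, hpb1⟩ := revq_eq_one hβ hse
          -- k = 1
          have hAB : pq α (m + 1) = pq β (k + 1) := by
            have hab : A = B := by rw [hre, hse] at hden; linarith
            rw [hA, hB] at hab
            exact_mod_cast hab
          refine Or.inl ⟨by omega, ?_⟩
          intro i h1 h2
          subst hm1; subst hk1
          interval_cases i
          · rw [hpa1, hpb1]
          · exact hAB
        · -- s < 1, forced s = 0, k = 0, B = A + 1
          have hslt : s < 1 := lt_of_le_of_ne hs1 hse
          have hz : s = ((pq α (m + 1) + 1 - pq β (k + 1) : ℤ) : ℝ) := by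
            push_cast
            rw [← hA, ← hB]
            rw [hre] at hden
            linarith
          have hz0 : (pq α (m + 1) + 1 - pq β (k + 1) : ℤ) = 0 := by
            have h1 : (0 : ℝ) ≤ ((pq α (m + 1) + 1 - pq β (k + 1) : ℤ) : ℝ) := hz ▸ hs0
            have h2 : ((pq α (m + 1) + 1 - pq β (k + 1) : ℤ) : ℝ) < 1 := hz ▸ hslt
            have h1' : (0 : ℤ) ≤ pq α (m + 1) + 1 - pq β (k + 1) := by exact_mod_cast h1
            have h3 : (pq α (m + 1) + 1 - pq β (k + 1) : ℤ) < 1 := by exact_mod_cast h2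
            omega
          have hs00 : s = 0 := by rw [hz]; exact_mod_cast congrArg (Int.cast : ℤ → ℝ) hz0
          have hk0 : k = 0 := by
            by_contra hk
            obtain ⟨j, rfl⟩ := Nat.exists_eq_succ_of_ne_zero hk
            exact (revq_pos hβ j).ne' hs00
          subst hk0; subst hm1
          norm_num at hz0
          refine Or.inr (Or.inl ⟨rfl, hpa1, by omega, by omega⟩)
      · by_cases hse : s = 1
        · obtain ⟨hk1, hpb1⟩ := revq_eq_one hβ hse
          have hrlt : r < 1 := lt_of_le_of_ne hr1 hre
          have hz : r = ((pq β (k + 1) + 1 - pq α (m + 1) : ℤ) : ℝ) := by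
            push_cast
            rw [← hA, ← hB]
            rw [hse] at hden
            linarith
          have hz0 : (pq β (k + 1) + 1 - pq α (m + 1) : ℤ) = 0 := by
            have h1 : (0 : ℝ) ≤ ((pq β (k + 1) + 1 - pq α (m + 1) : ℤ) : ℝ) := hz ▸ hr0
            have h2 : ((pq β (k + 1) + 1 - pq α (m + 1) : ℤ) : ℝ) < 1 := hz ▸ hrlt
            have h1' : (0 : ℤ) ≤ pq β (k + 1) + 1 - pq α (m + 1) := by exact_mod_cast h1
            have h3 : (pq β (k + 1) + 1 - pq α (m + 1) : ℤ) < 1 := by exact_mod_cast h2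
            omega
          have hr00 : r = 0 := by rw [hz]; exact_mod_cast congrArg (Int.cast : ℤ → ℝ) hz0
          have hm0 : m = 0 := by
            by_contra hm
            obtain ⟨j, rfl⟩ := Nat.exists_eq_succ_of_ne_zero hm
            exact (revq_pos hα j).ne' hr00
          subst hm0; subst hk1
          norm_num at hz0
          refine Or.inr (Or.inr ⟨rfl, hpb1, by omega, by omega⟩)
        · -- both < 1: match heads and recurse
          have hrlt : r < 1 := lt_of_le_of_ne hr1 hre
          have hslt : s < 1 := lt_of_le_of_ne hs1 hse
          have hAB : pq α (m + 1) = pq β (k + 1) := by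
            have e1 : A - B < 1 := by linarith
            have e2 : -(1 : ℝ) < A - B := by linarith
            rw [hA, hB] at e1 e2
            have e1' : pq α (m + 1) - pq β (k + 1) < 1 := by exact_mod_cast e1
            have e2' : -1 < pq α (m + 1) - pq β (k + 1) := by exact_mod_cast e2
            omega
          have hrs : revq α m = revq β k := by
            rw [← hr, ← hs]
            have : A = B := by rw [hA, hB]; exact_mod_cast hAB
            linarith [hden, this]
          rcases ih k hrs with ⟨hmk, heq⟩ | ⟨hmk, h1, h2, h3⟩ | ⟨hmk, h1, h2, h3⟩
          · refine Or.inl ⟨by omega, ?_⟩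
            intro i hi1 hi2
            rcases Nat.lt_or_ge i (m + 1) with hlt | hge
            · exact heq i hi1 (by omega)
            · have : i = m + 1 := by omega
              subst this
              rw [hAB, hmk]
          · refine Or.inr (Or.inl ⟨by omega, h1, h2, ?_⟩)
            intro i hi1 hi2
            rcases Nat.lt_or_ge i (k + 1) with hlt | hge
            · exact h3 i hi1 (by omega)
            · have hik : i = k + 1 := by omega
              rw [hik, ← hAB, hmk]
          · refine Or.inr (Or.inr ⟨by omega, h1, h2, ?_⟩)
            intro i hi1 hi2
            rcases Nat.lt_or_ge i (m + 1) with hlt | hge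
            · exact h3 i hi1 (by omega)
            · have him : i = m + 1 := by omega
              rw [him, hAB, hmk]

lemma cq_dist : ∀ (m : ℕ) (α β : ℝ), Irrational α → Irrational β →
    (∀ n, 1 ≤ n → pq α n = pq β n) → |cq α 1 - cq β 1| ≤ (1 / 2 : ℝ) ^ m
  | 0, α, β, hα, hβ, hpq => by
    have e1 := cq_eq_floor_add (α := α) 1
    have e2 := cq_eq_floor_add (α := β) 1
    have h1 : (pq α 1 : ℝ) = (pq β 1 : ℝ) := by exact_mod_cast hpq 1 le_rfl
    have key : cq α 1 - cq β 1 = Int.fract (cq α 1) - Int.fract (cq β 1) := by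
      linarith [e1, e2, h1]
    rw [key, pow_zero, abs_le]
    have := Int.fract_lt_one (cq α 1)
    have := Int.fract_lt_one (cq β 1)
    have := fract_cq_pos hα 1
    have := fract_cq_pos hβ 1
    constructor <;> linarith
  | m + 1, α, β, hα, hβ, hpq => by
    have hγ : Irrational (cq α 2) := cq_irrational hα 2
    have hδ : Irrational (cq β 2) := cq_irrational hβ 2
    have hpq' : ∀ n, 1 ≤ n → pq (cq α 2) n = pq (cq β 2) n := by
      intro n hn
      rw [← pq_shift, ← pq_shift]
      exact hpq (2 + n) (by omega)
    have ih := cq_dist m (cq α 2) (cq β 2) hγ hδ hpq'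
    rw [← cq_shift α 2 1, ← cq_shift β 2 1] at ih
    have g2 : 1 < cq α 2 := cq_one_lt hα 1
    have g3 : 1 < cq α 3 := cq_one_lt hα 2
    have d2 : 1 < cq β 2 := cq_one_lt hβ 1
    have d3 : 1 < cq β 3 := cq_one_lt hβ 2
    have a1 : (pq α 1 : ℝ) = (pq β 1 : ℝ) := by exact_mod_cast hpq 1 le_rfl
    have a2 : (pq α 2 : ℝ) = (pq β 2 : ℝ) := by exact_mod_cast hpq 2 one_le_two
    have ha2ge : (1 : ℝ) ≤ (pq α 2 : ℝ) := by exact_mod_cast pq_one_le hα one_le_two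
    have hb2ge : (1 : ℝ) ≤ (pq β 2 : ℝ) := by exact_mod_cast pq_one_le hβ one_le_two
    have ea1 := cq_eq hα 1
    have eb1 := cq_eq hβ 1
    have ea2 := cq_eq hα 2
    have eb2 := cq_eq hβ 2
    have n2 : cq α 2 ≠ 0 := by linarith
    have n3 : cq α 3 ≠ 0 := by linarith
    have m2 : cq β 2 ≠ 0 := by linarith
    have m3 : cq β 3 ≠ 0 := by linarith
    have k1 : cq α 1 - cq β 1 = (cq β 2 - cq α 2) / (cq α 2 * cq β 2) := by
      rw [ea1, eb1, a1]
      field_simp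
      ring
    have k2 : cq α 2 - cq β 2 = (cq β 3 - cq α 3) / (cq α 3 * cq β 3) := by
      rw [ea2, eb2, a2]
      field_simp
      ring
    have s1 : |cq α 1 - cq β 1| = |cq α 2 - cq β 2| / (cq α 2 * cq β 2) := by
      rw [k1, abs_div, abs_of_pos (by positivity : (0:ℝ) < cq α 2 * cq β 2), abs_sub_comm]
    have s2 : |cq α 2 - cq β 2| = |cq α 3 - cq β 3| / (cq α 3 * cq β 3) := by
      rw [k2, abs_div, abs_of_pos (by positivity : (0:ℝ) < cq α 3 * cq β 3), abs_sub_comm]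
    have hf23 : 2 < cq α 2 * cq α 3 := by
      have e : cq α 2 * cq α 3 = (pq α 2 : ℝ) * cq α 3 + 1 := by
        rw [ea2]; field_simp
      nlinarith
    have hg23 : 2 < cq β 2 * cq β 3 := by
      have e : cq β 2 * cq β 3 = (pq β 2 : ℝ) * cq β 3 + 1 := by
        rw [eb2]; field_simp
      nlinarith
    have hd4 : 4 < (cq α 2 * cq β 2) * (cq α 3 * cq β 3) := by nlinarith
    have s3 : |cq α 1 - cq β 1|
        = |cq α 3 - cq β 3| / ((cq α 2 * cq β 2) * (cq α 3 * cq β 3)) := by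
      rw [s1, s2, div_div, mul_comm (cq α 3 * cq β 3)]
    rw [s3]
    have step : |cq α 3 - cq β 3| / ((cq α 2 * cq β 2) * (cq α 3 * cq β 3))
        ≤ (1 / 2 : ℝ) ^ m / 4 :=
      div_le_div₀ (by positivity) ih (by norm_num) hd4.le
    have hp : (0 : ℝ) ≤ (1 / 2 : ℝ) ^ m := by positivity
    calc |cq α 3 - cq β 3| / ((cq α 2 * cq β 2) * (cq α 3 * cq β 3))
        ≤ (1 / 2 : ℝ) ^ m / 4 := step
      _ ≤ (1 / 2 : ℝ) ^ (m + 1) := by rw [pow_succ]; linarith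

lemma cq_one_eq {α β : ℝ} (hα : Irrational α) (hβ : Irrational β)
    (hpq : ∀ n, 1 ≤ n → pq α n = pq β n) : cq α 1 = cq β 1 := by
  by_contra hne
  have hpos : 0 < |cq α 1 - cq β 1| := abs_pos.mpr (sub_ne_zero.mpr hne)
  obtain ⟨m, hm⟩ := exists_pow_lt_of_lt_one hpos (by norm_num : (1 / 2 : ℝ) < 1)
  linarith [cq_dist m α β hα hβ hpq]

lemma caseA {α β : ℝ} (hα : Irrational α) (hβ : Irrational β)
    (hpq : ∀ i, 1 ≤ i → pq α i = pq β i) : ∃ z : ℤ, α - β = (z : ℝ) := by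
  have h1 : cq α 1 = cq β 1 := cq_one_eq hα hβ hpq
  have hfa : Int.fract α = 1 / cq α 1 := fract_cq_eq hα 0
  have hfb : Int.fract β = 1 / cq β 1 := fract_cq_eq hβ 0
  refine ⟨⌊α⌋ - ⌊β⌋, ?_⟩
  push_cast
  have fa := Int.floor_add_fract α
  have fb := Int.floor_add_fract β
  rw [h1] at hfa
  linarith [hfa, hfb]

lemma caseB {α β : ℝ} (hα : Irrational α) (hβ : Irrational β)
    (h1 : pq α 1 = 1) (h2 : pq β 1 = pq α 2 + 1)
    (h3 : ∀ i, 2 ≤ i → pq β i = pq α (i + 1)) :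
    ∃ z : ℤ, α + β = (z : ℝ) := by
  have hx : Irrational (cq β 1) := cq_irrational hβ 1
  have hy : Irrational (cq α 2) := cq_irrational hα 2
  have hpq : ∀ n, 1 ≤ n → pq (cq β 1) n = pq (cq α 2) n := by
    intro n hn
    rw [← pq_shift, ← pq_shift]
    have e : 1 + n + 1 = 2 + n := by omega
    calc pq β (1 + n) = pq α (1 + n + 1) := h3 (1 + n) (by omega)
      _ = pq α (2 + n) := by rw [e]
  have ht : cq (cq β 1) 1 = cq (cq α 2) 1 := cq_one_eq hx hy hpq
  have ex : cq β 1 = (pq β 1 : ℝ) + 1 / cq (cq β 1) 1 := by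
    rw [← cq_shift β 1 1]; exact cq_eq hβ 1
  have ey : cq α 2 = (pq α 2 : ℝ) + 1 / cq (cq α 2) 1 := by
    rw [← cq_shift α 2 1]; exact cq_eq hα 2
  have hxy : cq β 1 = cq α 2 + 1 := by
    have hc : (pq β 1 : ℝ) = (pq α 2 : ℝ) + 1 := by exact_mod_cast h2
    rw [ex, ey, ht]
    linarith
  have hy1 : 1 < cq α 2 := cq_one_lt hα 1
  have ea : cq α 1 = 1 + 1 / cq α 2 := by
    have e := cq_eq hα 1
    rw [h1] at e
    push_cast at e
    exact e
  have hfa : Int.fract α = 1 / cq α 1 := fract_cq_eq hα 0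
  have hfb : Int.fract β = 1 / cq β 1 := fract_cq_eq hβ 0
  have hsum : Int.fract α + Int.fract β = 1 := by
    rw [hfa, hfb, ea, hxy]
    have hy0 : cq α 2 ≠ 0 := by linarith
    have hy2 : cq α 2 + 1 ≠ 0 := by linarith
    have hiy : 0 < 1 / cq α 2 := by positivity
    have hy3 : 1 + 1 / cq α 2 ≠ 0 := by linarith
    field_simp
  refine ⟨⌊α⌋ + ⌊β⌋ + 1, ?_⟩
  push_cast
  have fa := Int.floor_add_fract α
  have fb := Int.floor_add_fract β
  linarith

theorem stmt15_aux (α β : ℝ) (hα : Irrational α) (hβ : Irrational β)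
    (h : {p : ℕ × ℕ | 1 ≤ p.1 ∧ 1 ≤ p.2 ∧ revq α p.1 = revq β p.2}.Infinite) :
    (∃ z : ℤ, α + β = (z : ℝ)) ∨ (∃ z : ℤ, α - β = (z : ℝ)) := by
  classical
  set S := {p : ℕ × ℕ | 1 ≤ p.1 ∧ 1 ≤ p.2 ∧ revq α p.1 = revq β p.2} with hSdef
  have hcover : S ⊆ {p ∈ S | p.1 = p.2} ∪ ({p ∈ S | p.1 = p.2 + 1} ∪ {p ∈ S | p.2 = p.1 + 1}) := by
    intro p hp
    rcases matchP hα hβ p.1 p.2 hp.2.2 with h1 | h1 | h1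
    · exact Or.inl ⟨hp, h1.1⟩
    · exact Or.inr (Or.inl ⟨hp, h1.1⟩)
    · exact Or.inr (Or.inr ⟨hp, h1.1⟩)
  have hinf := h.mono hcover
  rcases Set.infinite_union.mp hinf with hA | hBC
  · right
    apply caseA hα hβ
    intro i hi
    have himg : (Prod.fst '' {p ∈ S | p.1 = p.2}).Infinite := by
      refine (Set.infinite_image_iff ?_).mpr hA
      intro p hp q hq hpq
      exact Prod.ext hpq (by rw [← hp.2, ← hq.2, hpq])
    obtain ⟨μ, ⟨p, hp, rfl⟩, hlt⟩ := himg.exists_gt i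
    rcases matchP hα hβ p.1 p.2 hp.1.2.2 with h1 | h1 | h1
    · exact h1.2 i hi (by omega)
    · exact absurd h1.1 (by have := hp.2; omega)
    · exact absurd h1.1 (by have := hp.2; omega)
  rcases Set.infinite_union.mp hBC with hB | hC
  · left
    have hgen : ∀ i, 2 ≤ i → (pq α 1 = 1 ∧ pq β 1 = pq α 2 + 1 ∧ pq β i = pq α (i + 1)) := by
      intro i hi
      have himg : (Prod.snd '' {p ∈ S | p.1 = p.2 + 1}).Infinite := by
        refine (Set.infinite_image_iff ?_).mpr hB
        intro p hp q hq hpq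
        exact Prod.ext (by rw [hp.2, hq.2, hpq]) hpq
      obtain ⟨ν, ⟨p, hp, rfl⟩, hlt⟩ := himg.exists_gt i
      rcases matchP hα hβ p.1 p.2 hp.1.2.2 with h1 | h1 | h1
      · exact absurd h1.1 (by have := hp.2; omega)
      · exact ⟨h1.2.1, h1.2.2.1, h1.2.2.2 i hi (by omega)⟩
      · exact absurd h1.1 (by have := hp.2; omega)
    obtain ⟨e1, e2, _⟩ := hgen 2 le_rfl
    exact caseB hα hβ e1 e2 (fun i hi => (hgen i hi).2.2)
  · left
    have hgen : ∀ i, 2 ≤ i → (pq β 1 = 1 ∧ pq α 1 = pq β 2 + 1 ∧ pq α i = pq β (i + 1)) := by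
      intro i hi
      have himg : (Prod.fst '' {p ∈ S | p.2 = p.1 + 1}).Infinite := by
        refine (Set.infinite_image_iff ?_).mpr hC
        intro p hp q hq hpq
        exact Prod.ext hpq (by rw [hp.2, hq.2, hpq])
      obtain ⟨μ, ⟨p, hp, rfl⟩, hlt⟩ := himg.exists_gt i
      rcases matchP hα hβ p.1 p.2 hp.1.2.2 with h1 | h1 | h1
      · exact absurd h1.1 (by have := hp.2; omega)
      · exact absurd h1.1 (by have := hp.2; omega)
      · exact ⟨h1.2.1, h1.2.2.1, h1.2.2.2 i hi (by omega)⟩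
    obtain ⟨e1, e2, _⟩ := hgen 2 le_rfl
    obtain ⟨z, hz⟩ := caseB hβ hα e1 e2 (fun i hi => (hgen i hi).2.2)
    exact ⟨z, by rw [add_comm]; exact hz⟩

theorem stmt15 (α β : ℝ) (hα : Irrational α) (hβ : Irrational β)
    (h : {p : ℕ × ℕ | 1 ≤ p.1 ∧ 1 ≤ p.2 ∧ revq α p.1 = revq β p.2}.Infinite) :
    (∃ z : ℤ, α + β = (z : ℝ)) ∨ (∃ z : ℤ, α - β = (z : ℝ)) := by
  exact stmt15_aux α β hα hβ h
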